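/- Let Q and R be atomic Cartesian decompositions of a finite set Ω, and suppose there is an atomic Cartesian decomposition P of Ω with Q∩R ⪯ P, where Q∩R = {e∧f : e∈Q, f∈R, e∧f ≠ 1_Ω}. Then Q∩R is also an atomic Cartesian decomposition of Ω. -/

import Mathlib

open Set

def rcomp {Ω : Type*} (r s : Set (Ω × Ω)) : Set (Ω × Ω) :=
  {p | ∃ γ, (p.1, γ) ∈ r ∧ (γ, p.2) ∈ s}

def rconv {Ω : Type*} (r : Set (Ω × Ω)) : Set (Ω × Ω) := {p | (p.2, p.1) ∈ r}

def rdiag (Ω : Type*) : Set (Ω × Ω) := {p | p.1 = p.2}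

def IsEquivRel {Ω : Type*} (e : Set (Ω × Ω)) : Prop :=
  Equivalence (fun a b => (a, b) ∈ e)

/-- The smallest equivalence relation containing `r`. -/
def eqvClosure {Ω : Type*} (r : Set (Ω × Ω)) : Set (Ω × Ω) :=
  ⋂₀ {e | IsEquivRel e ∧ r ⊆ e}

/-- Join of two equivalence relations. -/
def rjoin {Ω : Type*} (e f : Set (Ω × Ω)) : Set (Ω × Ω) := eqvClosure (e ∪ f)

def IsClass {Ω : Type*} (e : Set (Ω × Ω)) (Δ : Set Ω) : Prop :=
  ∃ α, Δ = {β | (α, β) ∈ e}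

def setoidRel {Ω : Type*} (e : Setoid Ω) : Set (Ω × Ω) := {p | e.r p.1 p.2}

/-- The relation induced on the quotient `Ω/e` by a relation `r` on `Ω`. -/
def qmap {Ω : Type*} (e : Setoid Ω) (r : Set (Ω × Ω)) :
    Set (Quotient e × Quotient e) :=
  {p | ∃ a b : Ω, Quotient.mk e a = p.1 ∧ Quotient.mk e b = p.2 ∧ (a, b) ∈ r}

/-- Tensor product of relations. -/
def tensorRel {m : ℕ} {Ω : Fin m → Type*} (s : ∀ i, Set (Ω i × Ω i)) :
    Set ((∀ i, Ω i) × (∀ i, Ω i)) :=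
  {p | ∀ i, (p.1 i, p.2 i) ∈ s i}

def tensor2 {Ω₁ Ω₂ : Type*} (s₁ : Set (Ω₁ × Ω₁)) (s₂ : Set (Ω₂ × Ω₂)) :
    Set ((Ω₁ × Ω₂) × (Ω₁ × Ω₂)) :=
  {p | (p.1.1, p.2.1) ∈ s₁ ∧ (p.1.2, p.2.2) ∈ s₂}

/-- `PP e I` is the join of the equivalence relations `e i`, `i ∈ I`. -/
def PP {Ω : Type*} {m : ℕ} (e : Fin m → Set (Ω × Ω)) (I : Set (Fin m)) :
    Set (Ω × Ω) :=
  eqvClosure (⋃ i ∈ I, e i)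

/-- An atomic Cartesian decomposition, given as a family of equivalence relations. -/
def IsACDfam {Ω : Type*} {m : ℕ} (e : Fin m → Set (Ω × Ω)) : Prop :=
  0 < m ∧ (∀ i, IsEquivRel (e i)) ∧ (∀ i, e i ≠ rdiag Ω) ∧
  (∀ i j, rcomp (e i) (e j) = rcomp (e j) (e i)) ∧
  (∀ i, e i ∩ PP e ({i}ᶜ) = rdiag Ω) ∧
  (∀ i, rjoin (e i) (PP e ({i}ᶜ)) = Set.univ)

/-- Join of a set of relations. -/
def joinAll {Ω : Type*} (B : Set (Set (Ω × Ω))) : Set (Ω × Ω) := eqvClosure (⋃₀ B)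

/-- The `P`-complement of `e`: the join of the members of `P` other than `e`. -/
def pcompl {Ω : Type*} (P : Set (Set (Ω × Ω))) (e : Set (Ω × Ω)) : Set (Ω × Ω) :=
  joinAll (P \ {e})

/-- An atomic Cartesian decomposition, given as a set of equivalence relations. -/
def IsACD {Ω : Type*} (P : Set (Set (Ω × Ω))) : Prop :=
  P.Nonempty ∧ (∀ e ∈ P, IsEquivRel e ∧ e ≠ rdiag Ω) ∧
  (∀ e ∈ P, ∀ f ∈ P, rcomp e f = rcomp f e) ∧
  (∀ e ∈ P, e ∩ pcompl P e = rdiag Ω ∧ rjoin e (pcompl P e) = Set.univ)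

def IsPartitionOf {α : Type*} (P : Set α) (C : Set (Set α)) : Prop :=
  (∀ B ∈ C, B.Nonempty) ∧ (∀ B ∈ C, ∀ B' ∈ C, B ≠ B' → Disjoint B B') ∧ ⋃₀ C = P

/-- A coherent configuration on `Ω`. -/
structure CohCfg (Ω : Type*) where
  S : Set (Set (Ω × Ω))
  empty_not_mem : ∅ ∉ S
  cover : ∀ p : Ω × Ω, ∃ s ∈ S, p ∈ s
  pairwise_disjoint : ∀ s ∈ S, ∀ t ∈ S, s ≠ t → Disjoint s t
  diag_union : ∀ s ∈ S, (s ∩ rdiag Ω).Nonempty → s ⊆ rdiag Ω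
  conv_mem : ∀ s ∈ S, rconv s ∈ S
  inter_const : ∀ r ∈ S, ∀ s ∈ S, ∀ t ∈ S, ∀ p ∈ t, ∀ q ∈ t,
    ({γ : Ω | (p.1, γ) ∈ r ∧ (γ, p.2) ∈ s}).ncard
      = ({γ : Ω | (q.1, γ) ∈ r ∧ (γ, q.2) ∈ s}).ncard

/-- The valency of a basis relation (the common size of the rows over the left support). -/
noncomputable def valency {Ω : Type*} (s : Set (Ω × Ω)) : ℕ :=
  sSup ((fun α => ({β | (α, β) ∈ s} : Set Ω).ncard) '' {α | ∃ β, (α, β) ∈ s})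

def IsThick {Ω : Type*} (X : CohCfg Ω) : Prop :=
  ∀ s ∈ X.S, Disjoint s (rdiag Ω) → ¬(valency s = 1 ∧ valency (rconv s) = 1)

def IsParabolic {Ω : Type*} (X : CohCfg Ω) (e : Set (Ω × Ω)) : Prop :=
  IsEquivRel e ∧ ∀ s ∈ X.S, (s ∩ e).Nonempty → s ⊆ e

def Perp {Ω : Type*} (X : CohCfg Ω) (e f : Set (Ω × Ω)) : Prop :=
  ∀ x ∈ X.S, x ⊆ e → ∀ y ∈ X.S, y ⊆ f → (rcomp x y).Nonempty → rcomp x y ∈ X.S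

def Redundant {Ω : Type*} (X : CohCfg Ω) (s : Set (Ω × Ω)) : Prop :=
  ∃ x ∈ X.S, ∃ y ∈ X.S, Disjoint x (rdiag Ω) ∧ Disjoint y (rdiag Ω) ∧
    s = rcomp x y ∧ eqvClosure x ∩ eqvClosure y = rdiag Ω
/-! ### Auxiliary lemmas -/

section Aux
variable {Ω : Type*}

lemma isEquivRel_diag : IsEquivRel (rdiag Ω) :=
  ⟨fun _ => rfl, fun h => h.symm, fun h1 h2 => h1.trans h2⟩

lemma isEquivRel_univ : IsEquivRel (Set.univ : Set (Ω × Ω)) :=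
  ⟨fun _ => trivial, fun _ => trivial, fun _ _ => trivial⟩

lemma diag_subset' {e : Set (Ω × Ω)} (he : IsEquivRel e) : rdiag Ω ⊆ e := by
  rintro ⟨a, b⟩ (h : a = b)
  subst h
  exact he.refl a

lemma isEquivRel_inter {e f : Set (Ω × Ω)} (he : IsEquivRel e) (hf : IsEquivRel f) :
    IsEquivRel (e ∩ f) :=
  ⟨fun a => ⟨he.refl a, hf.refl a⟩, fun h => ⟨he.symm h.1, hf.symm h.2⟩,
   fun h1 h2 => ⟨he.trans h1.1 h2.1, hf.trans h1.2 h2.2⟩⟩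

lemma subset_eqvClosure (r : Set (Ω × Ω)) : r ⊆ eqvClosure r :=
  fun x hx => Set.mem_sInter.2 fun _ he => he.2 hx

lemma isEquivRel_eqvClosure (r : Set (Ω × Ω)) : IsEquivRel (eqvClosure r) := by
  refine ⟨fun a => ?_, fun {a b} h => ?_, fun {a b c} h1 h2 => ?_⟩
  · exact Set.mem_sInter.2 fun e he => he.1.refl a
  · exact Set.mem_sInter.2 fun e he => he.1.symm (Set.mem_sInter.1 h e he)
  · exact Set.mem_sInter.2 fun e he =>
      he.1.trans (Set.mem_sInter.1 h1 e he) (Set.mem_sInter.1 h2 e he)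

lemma eqvClosure_min {r e : Set (Ω × Ω)} (he : IsEquivRel e) (h : r ⊆ e) :
    eqvClosure r ⊆ e :=
  Set.sInter_subset_of_mem ⟨he, h⟩

lemma eqvClosure_self {e : Set (Ω × Ω)} (he : IsEquivRel e) : eqvClosure e = e :=
  le_antisymm (eqvClosure_min he (le_refl e)) (subset_eqvClosure e)

lemma eqvClosure_empty : eqvClosure (∅ : Set (Ω × Ω)) = rdiag Ω :=
  le_antisymm (eqvClosure_min isEquivRel_diag (Set.empty_subset _))
    ((diag_subset' (isEquivRel_eqvClosure _)))

lemma rcomp_assoc (r s t : Set (Ω × Ω)) :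
    rcomp (rcomp r s) t = rcomp r (rcomp s t) := by
  ext ⟨a, b⟩
  constructor
  · rintro ⟨γ, ⟨δ, h1, h2⟩, h3⟩; exact ⟨δ, h1, γ, h2, h3⟩
  · rintro ⟨γ, h1, δ, h2, h3⟩; exact ⟨δ, ⟨γ, h1, h2⟩, h3⟩

lemma rcomp_self {e : Set (Ω × Ω)} (he : IsEquivRel e) : rcomp e e = e := by
  ext ⟨a, b⟩
  constructor
  · rintro ⟨γ, h1, h2⟩; exact he.trans h1 h2
  · intro h; exact ⟨a, he.refl a, h⟩

lemma subset_rcomp_left {e f : Set (Ω × Ω)} (hf : IsEquivRel f) : e ⊆ rcomp e f := by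
  rintro ⟨a, b⟩ h; exact ⟨b, h, hf.refl b⟩

lemma subset_rcomp_right {e f : Set (Ω × Ω)} (he : IsEquivRel e) : f ⊆ rcomp e f := by
  rintro ⟨a, b⟩ h; exact ⟨a, he.refl a, h⟩

lemma rcomp_diag {e : Set (Ω × Ω)} (he : IsEquivRel e) : rcomp e (rdiag Ω) = e := by
  ext ⟨a, b⟩
  constructor
  · rintro ⟨γ, h1, (h2 : γ = b)⟩; exact h2 ▸ h1
  · intro h; exact ⟨b, h, rfl⟩

lemma diag_rcomp {e : Set (Ω × Ω)} (he : IsEquivRel e) : rcomp (rdiag Ω) e = e := by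
  ext ⟨a, b⟩
  constructor
  · rintro ⟨γ, (h1 : a = γ), h2⟩; exact h1 ▸ h2
  · intro h; exact ⟨a, rfl, h⟩

lemma rcomp_subset_join {e f k : Set (Ω × Ω)} (hk : IsEquivRel k)
    (h1 : e ⊆ k) (h2 : f ⊆ k) : rcomp e f ⊆ k := by
  rintro ⟨a, b⟩ ⟨γ, hγ1, hγ2⟩
  exact hk.trans (h1 hγ1) (h2 hγ2)

lemma isEquivRel_rcomp {e f : Set (Ω × Ω)} (he : IsEquivRel e) (hf : IsEquivRel f)
    (hc : rcomp e f = rcomp f e) : IsEquivRel (rcomp e f) := by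
  refine ⟨fun a => ⟨a, he.refl a, hf.refl a⟩, fun {a b} h => ?_, fun {a b c} h1 h2 => ?_⟩
  · obtain ⟨γ, hγ1, hγ2⟩ := h
    rw [hc]
    exact ⟨γ, hf.symm hγ2, he.symm hγ1⟩
  · obtain ⟨γ, hγ1, hγ2⟩ := h1
    obtain ⟨δ, hδ1, hδ2⟩ := h2
    have hγδ : (γ, δ) ∈ rcomp f e := ⟨b, hγ2, hδ1⟩
    rw [← hc] at hγδ
    obtain ⟨ε, hε1, hε2⟩ := hγδ
    exact ⟨ε, he.trans hγ1 hε1, hf.trans hε2 hδ2⟩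

lemma isEquivRel_joinAll (B : Set (Set (Ω × Ω))) : IsEquivRel (joinAll B) :=
  isEquivRel_eqvClosure _

lemma subset_joinAll {B : Set (Set (Ω × Ω))} {g : Set (Ω × Ω)} (h : g ∈ B) :
    g ⊆ joinAll B :=
  (Set.subset_sUnion_of_mem h).trans (subset_eqvClosure _)

lemma joinAll_min {B : Set (Set (Ω × Ω))} {k : Set (Ω × Ω)} (hk : IsEquivRel k)
    (h : ∀ g ∈ B, g ⊆ k) : joinAll B ⊆ k :=
  eqvClosure_min hk (Set.sUnion_subset h)

lemma joinAll_mono {B C : Set (Set (Ω × Ω))} (h : B ⊆ C) : joinAll B ⊆ joinAll C :=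
  joinAll_min (isEquivRel_joinAll C) fun g hg => subset_joinAll (h hg)

lemma joinAll_empty : joinAll (∅ : Set (Set (Ω × Ω))) = rdiag Ω := by
  unfold joinAll
  rw [Set.sUnion_empty, eqvClosure_empty]

end Aux

section Join

variable {Ω : Type*} [Fintype Ω] {P : Set (Set (Ω × Ω))}

/-- Key induction: joins of subfamilies of a pairwise commuting family of equivalence
relations commute with the members, and adjoining one member is composition. -/
lemma join_claim (hEq : ∀ g ∈ P, IsEquivRel g)
    (hComm : ∀ g ∈ P, ∀ h ∈ P, rcomp g h = rcomp h g) :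
    ∀ J : Set (Set (Ω × Ω)), J ⊆ P →
      (∀ g ∈ P, rcomp g (joinAll J) = rcomp (joinAll J) g) ∧
      (∀ h ∈ P, joinAll (insert h J) = rcomp h (joinAll J)) := by
  intro J
  refine Set.Finite.induction_on J (Set.toFinite J) ?_ ?_
  · intro _
    constructor
    · intro g hg
      rw [joinAll_empty, rcomp_diag (hEq g hg), diag_rcomp (hEq g hg)]
    · intro h hh
      rw [joinAll_empty, rcomp_diag (hEq h hh)]
      show eqvClosure _ = h
      rw [Set.sUnion_insert, Set.sUnion_empty, Set.union_empty]
      exact eqvClosure_self (hEq h hh)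
  · intro a s _hnotmem _ ih hsub
    have haP : a ∈ P := hsub (Set.mem_insert a s)
    have hsP : s ⊆ P := fun x hx => hsub (Set.mem_insert_of_mem a hx)
    obtain ⟨iha, ihb⟩ := ih hsP
    have hins : joinAll (insert a s) = rcomp a (joinAll s) := ihb a haP
    have hJeq : IsEquivRel (joinAll s) := isEquivRel_joinAll s
    constructor
    · intro g hg
      rw [hins, ← rcomp_assoc, hComm g hg a haP, rcomp_assoc, iha g hg,
        ← rcomp_assoc]
    · intro h hh
      have hcomm' : rcomp h (joinAll (insert a s)) = rcomp (joinAll (insert a s)) h := by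
        rw [hins, ← rcomp_assoc, hComm h hh a haP, rcomp_assoc, iha h hh, ← rcomp_assoc]
      have hEquivIns : IsEquivRel (joinAll (insert a s)) := isEquivRel_joinAll _
      have hrc : IsEquivRel (rcomp h (joinAll (insert a s))) :=
        isEquivRel_rcomp (hEq h hh) hEquivIns hcomm'
      apply le_antisymm
      · apply joinAll_min hrc
        intro g hg
        rcases hg with rfl | hg
        · exact (subset_rcomp_left hEquivIns)
        · exact (subset_joinAll hg).trans (subset_rcomp_right (hEq h hh))
      · exact rcomp_subset_join (isEquivRel_joinAll _)
          (subset_joinAll (Set.mem_insert h _))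
          (joinAll_mono (Set.subset_insert h (insert a s)))

lemma joinAll_comm (hEq : ∀ g ∈ P, IsEquivRel g)
    (hComm : ∀ g ∈ P, ∀ h ∈ P, rcomp g h = rcomp h g) :
    ∀ I : Set (Set (Ω × Ω)), I ⊆ P → ∀ J : Set (Set (Ω × Ω)), J ⊆ P →
      rcomp (joinAll I) (joinAll J) = rcomp (joinAll J) (joinAll I) := by
  intro I
  refine Set.Finite.induction_on I (Set.toFinite I) ?_ ?_
  · intro _ J hJ
    rw [joinAll_empty, diag_rcomp (isEquivRel_joinAll J), rcomp_diag (isEquivRel_joinAll J)]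
  · intro a s _ _ ih hsub J hJ
    have haP : a ∈ P := hsub (Set.mem_insert a s)
    have hsP : s ⊆ P := fun x hx => hsub (Set.mem_insert_of_mem a hx)
    have hins : joinAll (insert a s) = rcomp a (joinAll s) :=
      (join_claim hEq hComm s hsP).2 a haP
    have hcJ := (join_claim hEq hComm J hJ).1 a haP
    rw [hins, rcomp_assoc, ih hsP J hJ, ← rcomp_assoc, hcJ, rcomp_assoc]

lemma joinAll_union (hEq : ∀ g ∈ P, IsEquivRel g)
    (hComm : ∀ g ∈ P, ∀ h ∈ P, rcomp g h = rcomp h g)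
    {I J : Set (Set (Ω × Ω))} (hI : I ⊆ P) (hJ : J ⊆ P) :
    rcomp (joinAll I) (joinAll J) = joinAll (I ∪ J) := by
  apply le_antisymm
  · exact rcomp_subset_join (isEquivRel_joinAll _) (joinAll_mono Set.subset_union_left)
      (joinAll_mono Set.subset_union_right)
  · apply joinAll_min (isEquivRel_rcomp (isEquivRel_joinAll I) (isEquivRel_joinAll J)
      (joinAll_comm hEq hComm I hI J hJ))
    rintro g (hg | hg)
    · exact (subset_joinAll hg).trans (subset_rcomp_left (isEquivRel_joinAll J))
    · exact (subset_joinAll hg).trans (subset_rcomp_right (isEquivRel_joinAll I))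

lemma joinAll_indep (hEq : ∀ g ∈ P, IsEquivRel g)
    (hComm : ∀ g ∈ P, ∀ h ∈ P, rcomp g h = rcomp h g)
    (hMeet : ∀ g ∈ P, g ∩ joinAll (P \ {g}) ⊆ rdiag Ω) :
    ∀ I : Set (Set (Ω × Ω)), I ⊆ P → joinAll I ∩ joinAll (P \ I) ⊆ rdiag Ω := by
  intro I
  refine Set.Finite.induction_on I (Set.toFinite I) ?_ ?_
  · intro _
    rw [joinAll_empty]
    exact Set.inter_subset_left
  · intro g s hgs _ ih hsub
    have hgP : g ∈ P := hsub (Set.mem_insert g s)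
    have hsP : s ⊆ P := fun x hx => hsub (Set.mem_insert_of_mem g hx)
    rintro ⟨a, b⟩ ⟨hab1, hab2⟩
    have h1 : joinAll (insert g s) = rcomp g (joinAll s) :=
      (join_claim hEq hComm s hsP).2 g hgP
    rw [h1, (join_claim hEq hComm s hsP).1 g hgP] at hab1
    obtain ⟨γ, hγ1, hγ2⟩ := hab1
    have hb1 : (a, b) ∈ joinAll (P \ s) :=
      joinAll_mono (Set.diff_subset_diff_right (Set.subset_insert g s)) hab2
    have hgb : (γ, b) ∈ joinAll (P \ s) := subset_joinAll (⟨hgP, hgs⟩ : g ∈ P \ s) hγ2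
    have haγ : (a, γ) ∈ joinAll (P \ s) :=
      (isEquivRel_joinAll _).trans hb1 ((isEquivRel_joinAll _).symm hgb)
    have haγeq : a = γ := ih hsP ⟨hγ1, haγ⟩
    subst haγeq
    have hsub2 : P \ insert g s ⊆ P \ {g} :=
      Set.diff_subset_diff_right (Set.singleton_subset_iff.2 (Set.mem_insert g s))
    exact hMeet g hgP ⟨hγ2, joinAll_mono hsub2 hab2⟩

lemma joinAll_inter (hEq : ∀ g ∈ P, IsEquivRel g)
    (hComm : ∀ g ∈ P, ∀ h ∈ P, rcomp g h = rcomp h g)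
    (hMeet : ∀ g ∈ P, g ∩ joinAll (P \ {g}) ⊆ rdiag Ω)
    {I J : Set (Set (Ω × Ω))} (hI : I ⊆ P) (hJ : J ⊆ P) :
    joinAll I ∩ joinAll J = joinAll (I ∩ J) := by
  apply le_antisymm
  · rintro ⟨a, b⟩ ⟨h1, h2⟩
    have hIK : I ∩ J ∪ I \ (I ∩ J) = I := Set.union_diff_cancel Set.inter_subset_left
    have hsplit : (a, b) ∈ rcomp (joinAll (I ∩ J)) (joinAll (I \ (I ∩ J))) := by
      rw [joinAll_union hEq hComm (Set.inter_subset_left.trans hI)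
        (Set.diff_subset.trans hI), hIK]
      exact h1
    obtain ⟨γ, hγ1, hγ2⟩ := hsplit
    have haγJ : (a, γ) ∈ joinAll J := joinAll_mono Set.inter_subset_right hγ1
    have hγbJ : (γ, b) ∈ joinAll J :=
      (isEquivRel_joinAll J).trans ((isEquivRel_joinAll J).symm haγJ) h2
    have hJc : joinAll J ⊆ joinAll (P \ (I \ (I ∩ J))) :=
      joinAll_mono (fun x hx => ⟨hJ hx, fun hmem => hmem.2 ⟨hmem.1, hx⟩⟩)
    have hγb : γ = b :=
      joinAll_indep hEq hComm hMeet (I \ (I ∩ J)) (Set.diff_subset.trans hI)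
        ⟨hγ2, hJc hγbJ⟩
    subst hγb
    exact hγ1
  · exact Set.subset_inter (joinAll_mono Set.inter_subset_left)
      (joinAll_mono Set.inter_subset_right)

lemma joinAll_univ_of (hne : P.Nonempty)
    (hJoin : ∀ g ∈ P, rjoin g (pcompl P g) = Set.univ) :
    joinAll P = Set.univ := by
  obtain ⟨g, hg⟩ := hne
  apply le_antisymm (Set.subset_univ _)
  rw [← hJoin g hg]
  show eqvClosure (g ∪ pcompl P g) ⊆ joinAll P
  apply eqvClosure_min (isEquivRel_joinAll P)
  exact Set.union_subset (subset_joinAll hg) (joinAll_mono Set.diff_subset)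

/-- The key structural lemma: every member of an ACD `Q` refined by an ACD `P`
(in the sense that every member of `P` lies below some member of `Q`) is
the join of the members of `P` it contains. -/
lemma acd_member_eq_join {Q : Set (Set (Ω × Ω))}
    (hP : IsACD P) (hQ : IsACD Q) (hcov : ∀ g ∈ P, ∃ e ∈ Q, g ⊆ e) :
    ∀ q ∈ Q, q = joinAll {g | g ∈ P ∧ g ⊆ q} := by
  obtain ⟨hPne, hPeq, hPcomm, hPax⟩ := hP
  obtain ⟨_, hQeq, _, hQax⟩ := hQ
  have hEq : ∀ g ∈ P, IsEquivRel g := fun g hg => (hPeq g hg).1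
  intro q hq
  have hJP : {g | g ∈ P ∧ g ⊆ q} ⊆ P := fun g hg => hg.1
  have hJq : joinAll {g | g ∈ P ∧ g ⊆ q} ⊆ q :=
    joinAll_min (hQeq q hq).1 (fun g hg => hg.2)
  have hPuniv : joinAll P = Set.univ := joinAll_univ_of hPne (fun g hg => (hPax g hg).2)
  have hcompl : joinAll (P \ {g | g ∈ P ∧ g ⊆ q}) ⊆ pcompl Q q := by
    apply joinAll_min (isEquivRel_joinAll _)
    rintro g ⟨hgP, hgJ⟩
    obtain ⟨e, heQ, hge⟩ := hcov g hgP
    have heq : e ≠ q := fun h => hgJ ⟨hgP, h ▸ hge⟩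
    exact hge.trans (subset_joinAll (⟨heQ, heq⟩ : e ∈ Q \ {q}))
  refine le_antisymm ?_ hJq
  rintro ⟨a, b⟩ hab
  have hsplit : (a, b) ∈ rcomp (joinAll {g | g ∈ P ∧ g ⊆ q})
      (joinAll (P \ {g | g ∈ P ∧ g ⊆ q})) := by
    rw [joinAll_union hEq hPcomm hJP Set.diff_subset, Set.union_diff_cancel hJP, hPuniv]
    trivial
  obtain ⟨γ, hγ1, hγ2⟩ := hsplit
  have haγq : (a, γ) ∈ q := hJq hγ1
  have hγbq : (γ, b) ∈ q := (hQeq q hq).1.trans ((hQeq q hq).1.symm haγq) hab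
  have hγb : γ = b := by
    have hmem : (γ, b) ∈ q ∩ pcompl Q q := ⟨hγbq, hcompl hγ2⟩
    rw [(hQax q hq).1] at hmem
    exact hmem
  subst hγb
  exact hγ1

end Join

/-- if `Q∩R ⪯ P` for some atomic Cartesian decomposition `P`, then
`Q∩R` is an atomic Cartesian decomposition. -/
theorem stmt11 {Ω : Type*} [Fintype Ω] (Q R P : Set (Set (Ω × Ω)))
    (hQ : IsACD Q) (hR : IsACD R) (hP : IsACD P)
    (hle : ∀ g ∈ P, ∃ x ∈
      {x | ∃ e ∈ Q, ∃ f ∈ R, x = e ∩ f ∧ x ≠ rdiag Ω}, g ⊆ x) :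
    IsACD {x | ∃ e ∈ Q, ∃ f ∈ R, x = e ∩ f ∧ x ≠ rdiag Ω} := by
  set X : Set (Set (Ω × Ω)) := {x | ∃ e ∈ Q, ∃ f ∈ R, x = e ∩ f ∧ x ≠ rdiag Ω} with hXdef
  have hEq : ∀ g ∈ P, IsEquivRel g := fun g hg => (hP.2.1 g hg).1
  have hComm := hP.2.2.1
  have hMeet : ∀ g ∈ P, g ∩ joinAll (P \ {g}) ⊆ rdiag Ω :=
    fun g hg => le_of_eq (hP.2.2.2 g hg).1
  have hPuniv : joinAll P = Set.univ :=
    joinAll_univ_of hP.1 (fun g hg => (hP.2.2.2 g hg).2)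
  have hcovQ : ∀ g ∈ P, ∃ e ∈ Q, g ⊆ e := by
    intro g hg
    obtain ⟨x, hx, hgx⟩ := hle g hg
    obtain ⟨e, he, f, hf, rfl, -⟩ := hx
    exact ⟨e, he, hgx.trans Set.inter_subset_left⟩
  have hcovR : ∀ g ∈ P, ∃ f ∈ R, g ⊆ f := by
    intro g hg
    obtain ⟨x, hx, hgx⟩ := hle g hg
    obtain ⟨e, he, f, hf, rfl, -⟩ := hx
    exact ⟨f, hf, hgx.trans Set.inter_subset_right⟩
  have keyQ := acd_member_eq_join hP hQ hcovQ
  have keyR := acd_member_eq_join hP hR hcovR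
  -- every member of X is the join of the members of P below it
  have keyX : ∀ x ∈ X, x = joinAll {g | g ∈ P ∧ g ⊆ x} := by
    rintro x ⟨e, he, f, hf, rfl, hne⟩
    have h1 : e = joinAll {g | g ∈ P ∧ g ⊆ e} := keyQ e he
    have h2 : f = joinAll {g | g ∈ P ∧ g ⊆ f} := keyR f hf
    have h3 : joinAll {g | g ∈ P ∧ g ⊆ e} ∩ joinAll {g | g ∈ P ∧ g ⊆ f}
        = joinAll ({g | g ∈ P ∧ g ⊆ e} ∩ {g | g ∈ P ∧ g ⊆ f}) :=
      joinAll_inter hEq hComm hMeet (fun g hg => hg.1) (fun g hg => hg.1)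
    have h4 : {g : Set (Ω × Ω) | g ∈ P ∧ g ⊆ e} ∩ {g | g ∈ P ∧ g ⊆ f}
        = {g | g ∈ P ∧ g ⊆ e ∩ f} := by
      ext g
      simp only [Set.mem_inter_iff, Set.mem_setOf_eq, Set.subset_inter_iff]
      tauto
    conv_lhs => rw [h1, h2]
    rw [h3, h4]
  -- supports of distinct members of X are disjoint
  have hdisj : ∀ x ∈ X, ∀ y ∈ X, x ≠ y → ∀ g ∈ P, g ⊆ x → g ⊆ y → False := by
    rintro x ⟨e, he, f, hf, rfl, hxne⟩ y ⟨e', he', f', hf', rfl, hyne⟩ hxy g hgP hgx hgy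
    have hgd : g ≠ rdiag Ω := (hP.2.1 g hgP).2
    have hgdiag : g ⊆ rdiag Ω := by
      rcases eq_or_ne e e' with rfl | hee
      · rcases eq_or_ne f f' with rfl | hff
        · exact absurd rfl hxy
        · have hsub : f' ⊆ pcompl R f :=
            subset_joinAll (⟨hf', hff.symm⟩ : f' ∈ R \ {f})
          have hgm : g ⊆ f ∩ pcompl R f :=
            Set.subset_inter (hgx.trans Set.inter_subset_right)
              ((hgy.trans Set.inter_subset_right).trans hsub)
          rw [(hR.2.2.2 f hf).1] at hgm
          exact hgm
      · have hsub : e' ⊆ pcompl Q e :=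
          subset_joinAll (⟨he', hee.symm⟩ : e' ∈ Q \ {e})
        have hgm : g ⊆ e ∩ pcompl Q e :=
          Set.subset_inter (hgx.trans Set.inter_subset_left)
            ((hgy.trans Set.inter_subset_left).trans hsub)
        rw [(hQ.2.2.2 e he).1] at hgm
        exact hgm
    exact hgd (le_antisymm hgdiag (diag_subset' (hEq g hgP)))
  -- the complement of x in X is the join of the members of P not below x
  have hpc : ∀ x ∈ X, pcompl X x = joinAll (P \ {g | g ∈ P ∧ g ⊆ x}) := by
    intro x hx
    apply le_antisymm
    · apply joinAll_min (isEquivRel_joinAll _)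
      rintro y ⟨hyX, hyx⟩
      rw [keyX y hyX]
      apply joinAll_mono
      rintro g ⟨hgP, hgy⟩
      exact ⟨hgP, fun hgSx => hdisj x hx y hyX (fun h => hyx h.symm) g hgP hgSx.2 hgy⟩
    · apply joinAll_min (isEquivRel_joinAll _)
      rintro g ⟨hgP, hgSx⟩
      obtain ⟨y, hyX, hgy⟩ := hle g hgP
      have hyx : y ≠ x := fun h => hgSx ⟨hgP, h ▸ hgy⟩
      exact hgy.trans (subset_joinAll (⟨hyX, hyx⟩ : y ∈ X \ {x}))
  refine ⟨?_, ?_, ?_, ?_⟩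
  · obtain ⟨g, hg⟩ := hP.1
    obtain ⟨x, hx, -⟩ := hle g hg
    exact ⟨x, hx⟩
  · rintro x ⟨e, he, f, hf, rfl, hne⟩
    exact ⟨isEquivRel_inter (hQ.2.1 e he).1 (hR.2.1 f hf).1, hne⟩
  · intro x hx y hy
    rw [keyX x hx, keyX y hy]
    exact joinAll_comm hEq hComm _ (fun g hg => hg.1) _ (fun g hg => hg.1)
  · intro x hx
    have hSxP : {g : Set (Ω × Ω) | g ∈ P ∧ g ⊆ x} ⊆ P := fun g hg => hg.1
    constructor
    · rw [hpc x hx]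
      apply le_antisymm
      · have hind := joinAll_indep hEq hComm hMeet {g | g ∈ P ∧ g ⊆ x} hSxP
        rw [← keyX x hx] at hind
        exact hind
      · obtain ⟨e, he, f, hf, hxef, hne⟩ := hx
        have hxe : IsEquivRel x := hxef ▸ isEquivRel_inter (hQ.2.1 e he).1 (hR.2.1 f hf).1
        exact Set.subset_inter (diag_subset' hxe) (diag_subset' (isEquivRel_joinAll _))
    · rw [hpc x hx]
      apply le_antisymm (Set.subset_univ _)
      rw [← hPuniv]
      show joinAll P ⊆ eqvClosure (x ∪ joinAll (P \ {g | g ∈ P ∧ g ⊆ x}))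
      apply joinAll_min (isEquivRel_eqvClosure _)
      intro g hg
      by_cases hgx : g ⊆ x
      · exact hgx.trans (Set.subset_union_left.trans (subset_eqvClosure _))
      · have hg2 : g ⊆ joinAll (P \ {g | g ∈ P ∧ g ⊆ x}) :=
          subset_joinAll ⟨hg, fun h => hgx h.2⟩
        exact hg2.trans (Set.subset_union_right.trans (subset_eqvClosure _))
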